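/- Let (W,S) be a Coxeter system indexed by I and let α, β ⊆ I be spherical subsets such that for every n ∈ ℕ the alternating product prod_n(r_α, r_β) of n factors satisfies ℓ(prod_n(r_α,r_β)) = Σ_n(ℓ(r_α),ℓ(r_β)). Then the order of r_α r_β is infinite and the parabolic subgroup W_{α∪β} is infinite. -/

import Mathlib

/-- Alternating product `xyxy⋯` of `n` factors. -/
def altProd {W : Type*} [Monoid W] (x y : W) : ℕ → W
  | 0 => 1
  | n + 1 => x * altProd y x n

/-- Alternating sum `a + b + a + ⋯` of `n` terms. -/
def altSum (a b : ℕ) : ℕ → ℕ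
  | 0 => 0
  | n + 1 => a + altSum b a n

/-- `α` is spherical: the standard parabolic subgroup it generates is finite. -/
def IsSpherical {B W : Type*} [Group W] {M : CoxeterMatrix B} (cs : CoxeterSystem M W)
    (α : Set B) : Prop :=
  Set.Finite ((Subgroup.closure (cs.simple '' α) : Subgroup W) : Set W)

/-- `x` is the longest element of the standard parabolic subgroup generated by `α`. -/
def IsLongestOf {B W : Type*} [Group W] {M : CoxeterMatrix B} (cs : CoxeterSystem M W)
    (α : Set B) (x : W) : Prop :=
  x ∈ Subgroup.closure (cs.simple '' α) ∧
  (∀ u ∈ Subgroup.closure (cs.simple '' α), cs.length u ≤ cs.length x) ∧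
  (∀ u ∈ Subgroup.closure (cs.simple '' α), cs.length u = cs.length x → u = x)


lemma altProd_add_two {W : Type*} [Monoid W] (x y : W) (n : ℕ) :
    altProd x y (n + 2) = x * y * altProd x y n := by
  simp [altProd, mul_assoc]

lemma altProd_two_mul {W : Type*} [Monoid W] (x y : W) (n : ℕ) :
    altProd x y (2 * n) = (x * y) ^ n := by
  induction n with
  | zero => simp [altProd]
  | succ n ih =>
      have h : 2 * (n + 1) = (2 * n) + 2 := by ring
      rw [h, altProd_add_two, ih, pow_succ']

lemma altSum_add_two (a b n : ℕ) : altSum a b (n + 2) = a + b + altSum a b n := by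
  simp [altSum, Nat.add_assoc]

lemma altSum_two_mul (a b n : ℕ) : altSum a b (2 * n) = n * (a + b) := by
  induction n with
  | zero => simp [altSum]
  | succ n ih =>
      have h : 2 * (n + 1) = (2 * n) + 2 := by ring
      rw [h, altSum_add_two, ih, Nat.succ_mul]
      ring

/-- If all the alternating products `∏_n(r_α, r_β)` satisfy
`ℓ(∏_n(r_α,r_β)) = Σ_n(ℓ(r_α),ℓ(r_β))`, then `r_α r_β` has infinite order and the
standard parabolic subgroup `W_{α ∪ β}` is infinite. -/
theorem infinite_of_all_altProd_compatible {B W : Type*} [Group W] {M : CoxeterMatrix B}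
    (cs : CoxeterSystem M W)
    (α β : Set B) (hα : α.Nonempty) (hβ : β.Nonempty)
    (hsphα : IsSpherical cs α) (hsphβ : IsSpherical cs β)
    (rα rβ : W) (hrα : IsLongestOf cs α rα) (hrβ : IsLongestOf cs β rβ)
    (hcompat : ∀ n : ℕ,
      cs.length (altProd rα rβ n) = altSum (cs.length rα) (cs.length rβ) n) :
    ¬ IsOfFinOrder (rα * rβ) ∧
      Set.Infinite ((Subgroup.closure (cs.simple '' (α ∪ β)) : Subgroup W) : Set W) := by
  -- lengths of rα, rβ are positive
  obtain ⟨a, ha⟩ := hα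
  obtain ⟨b, hb⟩ := hβ
  have hsa : cs.simple a ∈ Subgroup.closure (cs.simple '' α) :=
    Subgroup.subset_closure ⟨a, ha, rfl⟩
  have hsb : cs.simple b ∈ Subgroup.closure (cs.simple '' β) :=
    Subgroup.subset_closure ⟨b, hb, rfl⟩
  have hla : 1 ≤ cs.length rα := by
    have := hrα.2.1 _ hsa
    simpa [cs.length_simple] using this
  have hlb : 1 ≤ cs.length rβ := by
    have := hrβ.2.1 _ hsb
    simpa [cs.length_simple] using this
  have hpow : ∀ n : ℕ, cs.length ((rα * rβ) ^ n) = n * (cs.length rα + cs.length rβ) := by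
    intro n
    rw [← altProd_two_mul, hcompat, altSum_two_mul]
  have hpos : 0 < cs.length rα + cs.length rβ := by omega
  have hinj : Function.Injective (fun n : ℕ => (rα * rβ) ^ n) := by
    intro m n h
    have := congrArg cs.length h
    simp only [hpow] at this
    exact Nat.eq_of_mul_eq_mul_right hpos this
  constructor
  · intro hfin
    obtain ⟨n, hn, h1⟩ := hfin.exists_pow_eq_one
    have := hpow n
    rw [h1, cs.length_one] at this
    have : n = 0 := by
      rcases Nat.mul_eq_zero.mp this.symm with h | h
      · exact h
      · omega
    omega
  · have hmem : ∀ n : ℕ, (rα * rβ) ^ n ∈ Subgroup.closure (cs.simple '' (α ∪ β)) := by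
      intro n
      apply Subgroup.pow_mem
      apply Subgroup.mul_mem
      · exact Subgroup.closure_mono (Set.image_mono Set.subset_union_left) hrα.1
      · exact Subgroup.closure_mono (Set.image_mono Set.subset_union_right) hrβ.1
    exact Set.infinite_of_injective_forall_mem hinj hmem
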